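/- arXiv:2211.03503 — 3 statements merged into one kernel-verified Lean document; each statement's English description precedes it below -/
import Mathlib

section
/- If f : X → X has the shadowing property, then the set of nonwandering points equals the set of chain recurrent points: Ω(f) = CR(f). -/
open Filter Topology MeasureTheory Set
open scoped ENNReal NNReal

variable {X : Type*} [MetricSpace X]

/-- `x` is in the chain stable set of `y` at scale `ε`: there is a finite sequence of
points starting at `x`, ending at `y`, and positive iteration times `t i` with
`d(f^[t i] (x i), x (i+1)) < ε`. -/
def ChainStable (f : X → X) (ε : ℝ) (x y : X) : Prop :=
  ∃ (n : ℕ) (c : ℕ → X) (t : ℕ → ℕ), 1 ≤ n ∧ c 0 = x ∧ c n = y ∧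
    ∀ i < n, 1 ≤ t i ∧ dist (f^[t i] (c i)) (c (i + 1)) < ε

/-- `x` and `y` are chain related: each is in the chain stable set of the other for every `ε > 0`. -/
def ChainRelated (f : X → X) (x y : X) : Prop :=
  ∀ ε : ℝ, 0 < ε → ChainStable f ε x y ∧ ChainStable f ε y x

/-- The set of chain recurrent points. -/
def ChainRecurrent (f : X → X) : Set X := {x | ChainRelated f x x}

/-- The chain recurrent class of a point `y`. -/
def ChainClassOf (f : X → X) (y : X) : Set X :=
  {x ∈ ChainRecurrent f | ChainRelated f x y}

/-- `Y` is a chain recurrent class. -/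
def IsChainClass (f : X → X) (Y : Set X) : Prop :=
  ∃ y ∈ ChainRecurrent f, Y = ChainClassOf f y

/-- `x` is a nonwandering point of `f`. -/
def NonWandering (f : X → X) (x : X) : Prop :=
  ∀ U : Set X, IsOpen U → x ∈ U → ∃ k : ℕ, 1 ≤ k ∧ (f^[k] '' U ∩ U).Nonempty

/-- `f` has the shadowing property. -/
def ShadowingProperty (f : X → X) : Prop :=
  ∀ ε : ℝ, 0 < ε → ∃ δ : ℝ, 0 < δ ∧ ∀ z : ℕ → X,
    (∀ n, dist (f (z n)) (z (n + 1)) < δ) → ∃ y : X, ∀ n, dist (f^[n] y) (z n) < ε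

/-- `q` is a minimal point: its orbit closure is a minimal set. -/
def MinimalPoint (f : X → X) (q : X) : Prop :=
  ∀ p ∈ closure (Set.range fun n => f^[n] q),
    closure (Set.range fun n => f^[n] p) = closure (Set.range fun n => f^[n] q)

/-- The `(n,ε)`-Bowen ball around `x`. -/
def bowenBall (f : X → X) (n : ℕ) (x : X) (ε : ℝ) : Set X :=
  {y | ∀ i < n, dist (f^[i] x) (f^[i] y) < ε}

/-- `C(Z,t,n,ε,f)`: infimum over countable covers of `Z` by Bowen balls `B_v(x,ε)`, `v ≥ n`,
of `Σ e^{-t v}`. -/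
noncomputable def bowenC (f : X → X) (Z : Set X) (t ε : ℝ) (n : ℕ) : ℝ≥0∞ :=
  ⨅ (c : ℕ → X) (v : ℕ → ℕ) (_ : ∀ i, n ≤ v i)
    (_ : Z ⊆ ⋃ i, bowenBall f (v i) (c i) ε),
    ∑' i, ENNReal.ofReal (Real.exp (-t * v i))

/-- `C(Z,t,ε,f) = lim_{n→∞} C(Z,t,n,ε,f)` (the limit is a supremum by monotonicity). -/
noncomputable def bowenCLim (f : X → X) (Z : Set X) (t ε : ℝ) : ℝ≥0∞ :=
  ⨆ n, bowenC f Z t ε n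

/-- Bowen entropy of `Z` at scale `ε`: `inf {t : C(Z,t,ε,f) = 0}`, valued in `[0,∞]`. -/
noncomputable def bowenH (f : X → X) (Z : Set X) (ε : ℝ) : ℝ≥0∞ :=
  sInf (ENNReal.ofReal '' {t : ℝ | bowenCLim f Z t ε = 0})

/-- Bowen topological entropy of `Z`: `lim_{ε→0} h_Z(f,ε)`, a supremum by monotonicity. -/
noncomputable def bowenEntropy (f : X → X) (Z : Set X) : ℝ≥0∞ :=
  ⨆ (ε : ℝ) (_ : 0 < ε), bowenH f Z ε

/-- Upper relative metric mean dimension of `Z`: `limsup_{ε→0⁺} h_Z(f,ε)/(-log ε)`. -/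
noncomputable def upperMdim (f : X → X) (Z : Set X) : ℝ≥0∞ :=
  Filter.limsup (fun ε : ℝ => bowenH f Z ε / ENNReal.ofReal (-Real.log ε))
    (nhdsWithin 0 (Set.Ioi 0))

/-- Lower relative metric mean dimension of `Z`: `liminf_{ε→0⁺} h_Z(f,ε)/(-log ε)`. -/
noncomputable def lowerMdim (f : X → X) (Z : Set X) : ℝ≥0∞ :=
  Filter.liminf (fun ε : ℝ => bowenH f Z ε / ENNReal.ofReal (-Real.log ε))
    (nhdsWithin 0 (Set.Ioi 0))

/-- Birkhoff average `(1/n) Σ_{i<n} Φ(f^i x)`. -/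
noncomputable def birkhoffAvg (f : X → X) (Φ : X → ℝ) (n : ℕ) (x : X) : ℝ :=
  (1 / (n : ℝ)) * ∑ i ∈ Finset.range n, Φ (f^[i] x)

/-- The `Φ`-irregular set: points where the Birkhoff averages of `Φ` diverge. -/
def IrregularSet (f : X → X) (Φ : X → ℝ) : Set X :=
  {x | ¬ ∃ L : ℝ, Tendsto (fun n => birkhoffAvg f Φ n x) atTop (nhds L)}
/-- A finite ε-chain can be interpolated into a genuine δ-pseudo-orbit segment. -/
lemma chain_to_orbit (f : X → X) (δ : ℝ) (hδ : 0 < δ) :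
    ∀ (n : ℕ) (c : ℕ → X) (t : ℕ → ℕ), 1 ≤ n →
    (∀ i < n, 1 ≤ t i ∧ dist (f^[t i] (c i)) (c (i + 1)) < δ) →
    ∃ (w : ℕ → X) (T : ℕ), 1 ≤ T ∧ w 0 = c 0 ∧ w T = c n ∧
      ∀ m < T, dist (f (w m)) (w (m + 1)) < δ := by
  intro n
  induction n with
  | zero => intro c t h; omega
  | succ n ih =>
    intro c t _ hch
    rcases Nat.eq_zero_or_pos n with hn | hn
    · subst hn
      obtain ⟨ht0, hd0⟩ := hch 0 (by omega)
      refine ⟨fun m => if m < t 0 then f^[m] (c 0) else c 1, t 0, ht0, ?_, ?_, ?_⟩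
      · beta_reduce
        rw [if_pos (by omega : 0 < t 0)]
        simp
      · beta_reduce
        rw [if_neg (lt_irrefl (t 0))]
      · intro m hm
        beta_reduce
        by_cases h1 : m + 1 < t 0
        · rw [if_pos hm, if_pos h1, Function.iterate_succ_apply' f m (c 0)]
          simpa using hδ
        · have he : m + 1 = t 0 := by omega
          rw [if_pos hm, if_neg h1]
          have h := hd0
          rw [← he, Function.iterate_succ_apply' f m (c 0)] at h
          exact h
    · obtain ⟨w, T, hT1, hw0, hwT, hwj⟩ := ih c t hn (fun i hi => hch i (by omega))
      obtain ⟨htn, hdn⟩ := hch n (by omega)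
      refine ⟨fun m => if m ≤ T then w m else if m < T + t n then f^[m - T] (c n)
        else c (n + 1), T + t n, by omega, ?_, ?_, ?_⟩
      · beta_reduce
        rw [if_pos (Nat.zero_le T)]; exact hw0
      · beta_reduce
        rw [if_neg (by omega : ¬ T + t n ≤ T), if_neg (lt_irrefl (T + t n))]
      · intro m hm
        beta_reduce
        rcases lt_or_ge m T with hmT | hmT
        · rw [if_pos (le_of_lt hmT), if_pos (by omega : m + 1 ≤ T)]
          exact hwj m hmT
        rcases eq_or_lt_of_le hmT with hmT' | hmT'
        · subst hmT'
          rw [if_pos (le_refl T), if_neg (by omega : ¬ T + 1 ≤ T)]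
          by_cases h1 : T + 1 < T + t n
          · rw [if_pos h1, hwT, (by omega : T + 1 - T = 1), Function.iterate_one]
            simpa using hδ
          · have ht1 : t n = 1 := by omega
            rw [if_neg h1, hwT]
            have h := hdn
            rw [ht1, Function.iterate_one] at h
            exact h
        · rw [if_neg (by omega : ¬ m ≤ T), if_pos (by omega : m < T + t n),
            if_neg (by omega : ¬ m + 1 ≤ T)]
          by_cases h1 : m + 1 < T + t n
          · rw [if_pos h1, (by omega : m + 1 - T = (m - T) + 1),
              Function.iterate_succ_apply' f (m - T) (c n)]
            simpa using hδ
          · rw [if_neg h1]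
            have h := hdn
            rw [← (by omega : m - T + 1 = t n),
              Function.iterate_succ_apply' f (m - T) (c n)] at h
            exact h

/-- If `f` has the shadowing property then `Ω(f) = CR(f)`. -/
theorem nonWandering_eq_chainRecurrent_of_shadowing [CompactSpace X]
    (f : X → X) (hf : Continuous f) (hsh : ShadowingProperty f) :
    {x : X | NonWandering f x} = ChainRecurrent f := by
  ext x
  simp only [Set.mem_setOf_eq]
  constructor
  · -- nonwandering ⇒ chain recurrent
    intro hx ε hε
    suffices h : ChainStable f ε x x by exact ⟨h, h⟩
    have hufc : UniformContinuous f := CompactSpace.uniformContinuous_of_continuous hf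
    obtain ⟨δf, hδf, hfc⟩ := Metric.uniformContinuous_iff.1 hufc (ε / 2) (by linarith)
    set ε' := min (ε / 2) δf with hε'def
    have hε' : 0 < ε' := lt_min (by linarith) hδf
    obtain ⟨k, hk1, hne⟩ := hx (Metric.ball x ε') Metric.isOpen_ball
      (Metric.mem_ball_self hε')
    obtain ⟨p, ⟨z, hz, hfz⟩, hp⟩ := hne
    rw [← hfz] at hp
    rw [Metric.mem_ball] at hp hz
    have hfxz : dist (f x) (f z) < ε / 2 := by
      rw [dist_comm]
      exact hfc (lt_of_lt_of_le hz (min_le_right _ _))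
    set c : ℕ → X := fun i => if i = 0 then x else if i < k then f^[i] z else x
      with hcdef
    have hc0 : c 0 = x := by simp [hcdef]
    have hck : c k = x := by
      rcases eq_or_ne k 0 with h | h <;> simp [hcdef, h]
    have hci : ∀ i, i ≠ 0 → i < k → c i = f^[i] z := by
      intro i h1 h2; simp [hcdef, h1, h2]
    refine ⟨k, c, fun _ => 1, hk1, hc0, hck, ?_⟩
    intro i hi
    refine ⟨le_refl 1, ?_⟩
    rw [Function.iterate_one]
    rcases Nat.eq_zero_or_pos i with hi0 | hi0
    · subst hi0
      rw [hc0]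
      by_cases hk : k = 1
      · have hc1 : c (0 + 1) = x := by
          rw [(by omega : 0 + 1 = k), hck]
        rw [hc1]
        have hfz1 : dist (f z) x < ε / 2 := by
          have h := hp
          rw [hk, Function.iterate_one] at h
          exact lt_of_lt_of_le h (min_le_left _ _)
        calc dist (f x) x ≤ dist (f x) (f z) + dist (f z) x := dist_triangle _ _ _
          _ < ε / 2 + ε / 2 := by linarith
          _ = ε := by ring
      · have hc1 : c (0 + 1) = f z := by
          rw [hci 1 one_ne_zero (by omega), Function.iterate_one]
        rw [hc1]
        linarith
    · rw [hci i (by omega) hi]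
      by_cases h1 : i + 1 < k
      · rw [hci (i + 1) (by omega) h1, Function.iterate_succ_apply' f i z]
        simpa using hε
      · have he : i + 1 = k := by omega
        rw [he, hck, ← Function.iterate_succ_apply' f i z]
        rw [← he] at hp
        exact lt_of_lt_of_le hp (le_trans (min_le_left _ _) (by linarith))
  · -- chain recurrent ⇒ nonwandering (uses shadowing)
    intro hx U hU hxU
    obtain ⟨ε, hε, hball⟩ := Metric.isOpen_iff.1 hU x hxU
    obtain ⟨δ, hδ, hshad⟩ := hsh (ε / 2) (by linarith)
    obtain ⟨n, c, t, hn1, hc0, hcn, hch⟩ := (hx δ hδ).1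
    obtain ⟨w, T, hT1, hw0, hwT, hwj⟩ := chain_to_orbit f δ hδ n c t hn1 hch
    rw [hc0] at hw0
    rw [hcn] at hwT
    set z : ℕ → X := fun m => w (m % T) with hz
    have hpo : ∀ m, dist (f (z m)) (z (m + 1)) < δ := by
      intro m
      have hr : m % T < T := Nat.mod_lt _ (by omega)
      have hsucc : (m + 1) % T = (m % T + 1) % T := (Nat.mod_add_mod m T 1).symm
      by_cases h1 : m % T + 1 = T
      · have h0 : (m + 1) % T = 0 := by rw [hsucc, h1, Nat.mod_self]
        have h := hwj (m % T) hr
        rw [h1, hwT, ← hw0] at h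
        simpa only [hz, h0] using h
      · have h2 : (m + 1) % T = m % T + 1 := by
          rw [hsucc, Nat.mod_eq_of_lt (by omega)]
        simpa only [hz, h2] using hwj (m % T) hr
    obtain ⟨y, hy⟩ := hshad z hpo
    refine ⟨T, hT1, f^[T] y, ⟨y, ?_, rfl⟩, ?_⟩
    · have h0 := hy 0
      simp only [hz, Nat.zero_mod, Function.iterate_zero_apply, hw0] at h0
      exact hball (Metric.mem_ball.2 (by linarith))
    · have hT := hy T
      simp only [hz, Nat.mod_self, hw0] at hT
      exact hball (Metric.mem_ball.2 (by linarith))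
end

section
/- Suppose f has the shadowing property and let ε > 0 with δ > 0 chosen so that every δ-pseudo-orbit is (ε/2)-shadowed. If {z_i}_{i≥0} is a periodic δ-pseudo-orbit with period s (i.e., z_{i+s} = z_i for all i), then there exists a minimal point q of (X,f) such that d(z_i, f^i(q)) ≤ ε/2 for all i ≥ 0. -/
open Filter Topology MeasureTheory Set
open scoped ENNReal NNReal

variable {X : Type*} [MetricSpace X]

section AuxMinimal

variable {X : Type*} [MetricSpace X]

private lemma orbitClosure_mapsTo (f : X → X) (hf : Continuous f) (q : X) :
    Set.MapsTo f (closure (Set.range fun n => f^[n] q))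
      (closure (Set.range fun n => f^[n] q)) := by
  intro x hx
  refine map_mem_closure hf hx ?_
  rintro _ ⟨n, rfl⟩
  exact ⟨n + 1, Function.iterate_succ_apply' f n q⟩

private lemma orbitClosure_subset (f : X → X) (hf : Continuous f) {p q : X}
    (hq : q ∈ closure (Set.range fun n => f^[n] p)) :
    closure (Set.range fun n => f^[n] q) ⊆ closure (Set.range fun n => f^[n] p) := by
  refine closure_minimal ?_ isClosed_closure
  rintro _ ⟨n, rfl⟩
  exact ((orbitClosure_mapsTo f hf p).iterate n) hq

end AuxMinimal

/-- A periodic `δ`-pseudo-orbit which is `(ε/2)`-shadowed is `(ε/2)`-traced by a minimal point. -/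
theorem minimal_point_shadows_periodic_pseudo_orbit [CompactSpace X]
    (f : X → X) (hf : Continuous f) (hsh : ShadowingProperty f)
    (ε δ : ℝ) (hε : 0 < ε) (hδ : 0 < δ)
    (hshad : ∀ z : ℕ → X, (∀ n, dist (f (z n)) (z (n + 1)) < δ) →
      ∃ y : X, ∀ n, dist (f^[n] y) (z n) < ε / 2)
    (z : ℕ → X) (hz : ∀ n, dist (f (z n)) (z (n + 1)) < δ)
    (s : ℕ) (hs : 1 ≤ s) (hper : ∀ i, z (i + s) = z i) :
    ∃ q : X, MinimalPoint f q ∧ ∀ i, dist (z i) (f^[i] q) ≤ ε / 2 := by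
  obtain ⟨y, hy⟩ := hshad z hz
  classical
  set g : X → X := f^[s] with hg_def
  have hg : Continuous g := hf.iterate s
  set K : Set X := {x | ∀ n, dist (f^[n] x) (z n) ≤ ε / 2} with hK_def
  have hyK : y ∈ K := fun n => (hy n).le
  have hKclosed : IsClosed K := by
    have : K = ⋂ n, (fun x => dist (f^[n] x) (z n)) ⁻¹' Set.Iic (ε / 2) := by
      ext x; simp [hK_def, Set.mem_iInter]
    rw [this]
    exact isClosed_iInter fun n =>
      IsClosed.preimage (Continuous.dist (hf.iterate n) continuous_const) isClosed_Iic
  have hKinv : Set.MapsTo g K K := by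
    intro x hx n
    have h1 : f^[n] (g x) = f^[n + s] x := by
      rw [hg_def, ← Function.iterate_add_apply]
    have h2 := hx (n + s)
    rwa [hper n, ← h1] at h2
  -- Zorn's lemma to find a minimal closed g-invariant subset of K
  set S : Set (Set X) := {A | A.Nonempty ∧ IsClosed A ∧ A ⊆ K ∧ Set.MapsTo g A A} with hS_def
  have hKS : K ∈ S := ⟨⟨y, hyK⟩, hKclosed, subset_rfl, hKinv⟩
  have hZorn : ∀ c ⊆ S, IsChain (· ⊆ ·) c → c.Nonempty →
      ∃ lb ∈ S, ∀ A ∈ c, lb ⊆ A := by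
    intro c hcS hchain hcne
    haveI : Nonempty c := hcne.to_subtype
    refine ⟨⋂₀ c, ⟨?_, ?_, ?_, ?_⟩, fun A hA => Set.sInter_subset_of_mem hA⟩
    · have hdir : DirectedOn (· ⊇ ·) c := by
        intro A hA B hB
        rcases hchain.total hA hB with h | h
        · exact ⟨A, hA, Set.Subset.rfl, h⟩
        · exact ⟨B, hB, h, Set.Subset.rfl⟩
      exact IsCompact.nonempty_sInter_of_directed_nonempty_isCompact_isClosed
        hdir (fun U hU => (hcS hU).1)
        (fun U hU => (hcS hU).2.1.isCompact) (fun U hU => (hcS hU).2.1)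
    · exact isClosed_sInter fun U hU => (hcS hU).2.1
    · obtain ⟨A, hA⟩ := hcne
      exact (Set.sInter_subset_of_mem hA).trans (hcS hA).2.2.1
    · intro x hx
      rw [Set.mem_sInter] at hx ⊢
      exact fun U hU => (hcS hU).2.2.2 (hx U hU)
  obtain ⟨M, -, hMS, hMmin⟩ := zorn_superset_nonempty S hZorn K hKS
  obtain ⟨hMne, hMclosed, hMK, hMinv⟩ := hMS
  obtain ⟨q, hqM⟩ := hMne
  -- key: for any m ∈ M, the closure of its (shifted) g-orbit is all of M
  have key : ∀ m ∈ M, closure (Set.range fun k => g^[k + 1] m) = M := by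
    intro m hm
    set A : Set X := closure (Set.range fun k => g^[k + 1] m) with hA_def
    have hAM : A ⊆ M := by
      refine closure_minimal ?_ hMclosed
      rintro _ ⟨k, rfl⟩
      exact hMinv.iterate (k + 1) hm
    have hAS : A ∈ S := by
      refine ⟨⟨g^[1] m, subset_closure ⟨0, rfl⟩⟩, isClosed_closure, hAM.trans hMK, ?_⟩
      intro x hx
      refine map_mem_closure hg hx ?_
      rintro _ ⟨k, rfl⟩
      exact ⟨k + 1, Function.iterate_succ_apply' g (k + 1) m⟩
    exact ((hMmin hAS hAM).antisymm hAM).symm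
  refine ⟨q, ?_, fun i => by rw [dist_comm]; exact hMK hqM i⟩
  -- q is a minimal point of f
  intro p hp
  -- Step A: p = f^[j] m for some m ∈ M, j < s
  have hstepA : ∃ j < s, ∃ m ∈ M, p = f^[j] m := by
    have hN : IsClosed (⋃ j ∈ Finset.range s, f^[j] '' M) := by
      refine Set.Finite.isClosed_biUnion (Finset.finite_toSet _) fun j _ => ?_
      exact (hMclosed.isCompact.image (hf.iterate j)).isClosed
    have horb : (Set.range fun n => f^[n] q) ⊆ ⋃ j ∈ Finset.range s, f^[j] '' M := by
      rintro _ ⟨n, rfl⟩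
      have hjs : n % s < s := Nat.mod_lt n hs
      refine Set.mem_biUnion (Finset.mem_range.mpr hjs) ⟨g^[n / s] q, hMinv.iterate _ hqM, ?_⟩
      rw [hg_def, ← Function.iterate_mul, ← Function.iterate_add_apply]
      rw [Nat.mod_add_div n s]
    have := closure_minimal horb hN hp
    simp only [Set.mem_iUnion, Finset.mem_range, Set.mem_image] at this
    obtain ⟨j, hj, m, hm, hmp⟩ := this
    exact ⟨j, hj, m, hm, hmp.symm⟩
  obtain ⟨j, hj, m, hm, rfl⟩ := hstepA
  -- Step B: q ∈ closure of the f-orbit of p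
  have hstepB : q ∈ closure (Set.range fun n => f^[n] (f^[j] m)) := by
    have hsub : (Set.range fun k => g^[k + 1] m) ⊆ Set.range fun n => f^[n] (f^[j] m) := by
      rintro _ ⟨k, rfl⟩
      refine ⟨s * k + (s - j), ?_⟩
      show f^[s * k + (s - j)] (f^[j] m) = g^[k + 1] m
      rw [← Function.iterate_add_apply]
      have harith : s * k + (s - j) + j = s * (k + 1) := by
        rw [Nat.add_assoc, Nat.sub_add_cancel hj.le, Nat.mul_succ]
      rw [harith, hg_def, Function.iterate_mul]
    have : closure (Set.range fun k => g^[k + 1] m)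
        ⊆ closure (Set.range fun n => f^[n] (f^[j] m)) := closure_mono hsub
    exact this ((key m hm).symm ▸ hqM)
  exact subset_antisymm (orbitClosure_subset f hf hp) (orbitClosure_subset f hf hstepB)
end

section
/- Pressure Distribution Principle (simplified): Let f : X → X be continuous on a compact metric space and Z ⊆ X Borel. Suppose there are ε > 0, s ∈ ℝ, K > 0, and a sequence of Borel probability measures {μ_k} such that (1) μ_k converges in weak* topology to a measure μ with μ(Z) > 0, and (2) limsup_{k→∞} μ_k(B_n(x,ε)) ≤ K e^{-ns} for every sufficiently large n and every Bowen ball B_n(x,ε) with B_n(x,ε) ∩ Z ≠ ∅. Then h_Z(f,ε) ≥ s. -/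
open Filter Topology MeasureTheory Set
open scoped ENNReal NNReal

variable {X : Type*} [MetricSpace X]

/-- Simplified Pressure Distribution Principle. -/
theorem pressure_distribution_principle [CompactSpace X]
    [MeasurableSpace X] [BorelSpace X]
    (f : X → X) (hf : Continuous f) (Z : Set X) (hZBorel : MeasurableSet Z)
    (ε s K : ℝ) (hε : 0 < ε) (hK : 0 < K)
    (μseq : ℕ → Measure X) (hprob : ∀ k, IsProbabilityMeasure (μseq k))
    (μ : Measure X) (hμprob : IsProbabilityMeasure μ)
    (hconv : ∀ g : X → ℝ, Continuous g →
      Tendsto (fun k => ∫ x, g x ∂(μseq k)) atTop (nhds (∫ x, g x ∂μ)))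
    (hpos : 0 < μ Z)
    (hbound : ∃ N : ℕ, ∀ n ≥ N, ∀ x : X, (bowenBall f n x ε ∩ Z).Nonempty →
      Filter.limsup (fun k => μseq k (bowenBall f n x ε)) atTop ≤
        ENNReal.ofReal (K * Real.exp (-(n : ℝ) * s))) :
    ENNReal.ofReal s ≤ bowenH f Z ε := by
  classical
  rcases le_or_gt s 0 with hs | hs
  · simp [ENNReal.ofReal_eq_zero.mpr hs]
  -- package as probability measures and get weak convergence
  set P : ℕ → ProbabilityMeasure X := fun k => ⟨μseq k, hprob k⟩ with hP
  set Pm : ProbabilityMeasure X := ⟨μ, hμprob⟩ with hPm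
  have hPtend : Tendsto P atTop (𝓝 Pm) := by
    rw [ProbabilityMeasure.tendsto_iff_forall_integral_tendsto]
    intro g
    exact hconv g g.continuous
  have hopen : ∀ (n : ℕ) (x : X), IsOpen (bowenBall f n x ε) := by
    intro n x
    have heq : bowenBall f n x ε
        = ⋂ i ∈ Finset.range n, (f^[i]) ⁻¹' Metric.ball (f^[i] x) ε := by
      ext y
      simp [bowenBall, Metric.mem_ball, dist_comm]
    rw [heq]
    exact isOpen_biInter_finset fun i _ =>
      ((hf.iterate i)).isOpen_preimage _ Metric.isOpen_ball
  refine le_sInf ?_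
  rintro a ⟨t, ht, rfl⟩
  by_contra hst
  have hts : t < s := by
    by_contra h
    push_neg at h
    exact hst (ENNReal.ofReal_le_ofReal h)
  have hzero : ∀ n, bowenC f Z t ε n = 0 := by
    intro n
    have h := ht
    simp only [mem_setOf_eq, bowenCLim, ENNReal.iSup_eq_zero] at h
    exact h n
  obtain ⟨N, hN⟩ := hbound
  -- μ-bound on Bowen balls meeting Z via portmanteau
  have hμle : ∀ (n : ℕ), N ≤ n → ∀ x : X, (bowenBall f n x ε ∩ Z).Nonempty →
      μ (bowenBall f n x ε) ≤ ENNReal.ofReal (K * Real.exp (-(n : ℝ) * s)) := by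
    intro n hn x hne
    have h1 : (Pm : Measure X) (bowenBall f n x ε)
        ≤ atTop.liminf fun k => (P k : Measure X) (bowenBall f n x ε) :=
      ProbabilityMeasure.le_liminf_measure_open_of_tendsto hPtend (hopen n x)
    have h2 : (atTop.liminf fun k => (P k : Measure X) (bowenBall f n x ε))
        ≤ atTop.limsup fun k => (P k : Measure X) (bowenBall f n x ε) :=
      liminf_le_limsup
    exact h1.trans (h2.trans (hN n hn x hne))
  -- choose n large
  have hpow : Tendsto (fun n : ℕ => K * Real.exp (-(s - t)) ^ n) atTop (𝓝 0) := by
    have h1 : |Real.exp (-(s - t))| < 1 := by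
      rw [abs_of_pos (Real.exp_pos _)]
      exact Real.exp_lt_one_iff.mpr (by linarith)
    simpa using (tendsto_pow_atTop_nhds_zero_of_abs_lt_one h1).const_mul K
  have hmpos : 0 < (μ Z).toReal :=
    ENNReal.toReal_pos hpos.ne' (measure_lt_top μ Z).ne
  obtain ⟨n, hnN, hnlt⟩ :
      ∃ n : ℕ, N ≤ n ∧ K * Real.exp (-(s - t)) ^ n < (μ Z).toReal := by
    have := ((hpow.eventually_lt_const hmpos).and (eventually_ge_atTop N)).exists
    exact ⟨this.choose, this.choose_spec.2, this.choose_spec.1⟩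
  -- get a cover with small sum
  have hlt1 : bowenC f Z t ε n < 1 := by
    rw [hzero n]; exact zero_lt_one
  rw [bowenC] at hlt1
  simp only [iInf_lt_iff] at hlt1
  obtain ⟨c, v, hv, hcov, hsum⟩ := hlt1
  set B : ℕ → Set X := fun i => bowenBall f (v i) (c i) ε with hB
  set B' : ℕ → Set X := fun i => if (B i ∩ Z).Nonempty then B i else ∅ with hB'
  have hcov' : Z ⊆ ⋃ i, B' i := by
    intro x hx
    obtain ⟨i, hi⟩ := mem_iUnion.mp (hcov hx)
    refine mem_iUnion.mpr ⟨i, ?_⟩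
    have : (B i ∩ Z).Nonempty := ⟨x, hi, hx⟩
    simp only [hB', if_pos this]
    exact hi
  have key : ∀ i, μ (B' i)
      ≤ ENNReal.ofReal (K * Real.exp (-(s - t)) ^ n) * ENNReal.ofReal (Real.exp (-t * v i)) := by
    intro i
    by_cases hne : (B i ∩ Z).Nonempty
    · simp only [hB', if_pos hne]
      have h1 := hμle (v i) (le_trans hnN (hv i)) (c i) hne
      refine h1.trans ?_
      rw [← ENNReal.ofReal_mul (by positivity)]
      apply ENNReal.ofReal_le_ofReal
      have hexp : Real.exp (-(v i : ℝ) * s)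
          = Real.exp (-(s - t)) ^ v i * Real.exp (-t * v i) := by
        rw [← Real.exp_nat_mul, ← Real.exp_add]
        congr 1
        ring
      have hpl : Real.exp (-(s - t)) ^ v i ≤ Real.exp (-(s - t)) ^ n :=
        pow_le_pow_of_le_one (Real.exp_pos _).le
          (Real.exp_le_one_iff.mpr (by linarith)) (hv i)
      rw [hexp]
      calc K * (Real.exp (-(s - t)) ^ v i * Real.exp (-t * (v i : ℝ)))
          ≤ K * (Real.exp (-(s - t)) ^ n * Real.exp (-t * (v i : ℝ))) :=
            mul_le_mul_of_nonneg_left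
              (mul_le_mul_of_nonneg_right hpl (Real.exp_pos _).le) hK.le
        _ = K * Real.exp (-(s - t)) ^ n * Real.exp (-t * (v i : ℝ)) := by ring
    · simp only [hB', if_neg hne]
      simp
  have hfinal : μ Z ≤ ENNReal.ofReal (K * Real.exp (-(s - t)) ^ n) := by
    calc μ Z ≤ μ (⋃ i, B' i) := measure_mono hcov'
      _ ≤ ∑' i, μ (B' i) := measure_iUnion_le _
      _ ≤ ∑' i, ENNReal.ofReal (K * Real.exp (-(s - t)) ^ n)
            * ENNReal.ofReal (Real.exp (-t * v i)) := ENNReal.tsum_le_tsum key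
      _ = ENNReal.ofReal (K * Real.exp (-(s - t)) ^ n)
            * ∑' i, ENNReal.ofReal (Real.exp (-t * v i)) := by rw [ENNReal.tsum_mul_left]
      _ ≤ ENNReal.ofReal (K * Real.exp (-(s - t)) ^ n) * 1 :=
          mul_le_mul_right hsum.le _
      _ = _ := mul_one _
  have : μ Z < μ Z := by
    calc μ Z ≤ ENNReal.ofReal (K * Real.exp (-(s - t)) ^ n) := hfinal
      _ < ENNReal.ofReal (μ Z).toReal := (ENNReal.ofReal_lt_ofReal_iff hmpos).mpr hnlt
      _ = μ Z := ENNReal.ofReal_toReal (measure_lt_top μ Z).ne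
  exact absurd this (lt_irrefl _)
end
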